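/- With p_H, p_E and p_C as defined, it holds exactly that H(p_C) − KL( p_H ‖ p_C ⊗ p_E ) = −(1/E)·Σ_{e∈E} log( 2/(|e|·(|e|−1)) ) = log γ₁, where p_C ⊗ p_E is the product distribution ({i,j}, e) ↦ p_C({i,j})·p_E(e), H(p_C) = −Σ_{{i,j}} p_C({i,j}) log p_C({i,j}), and KL( p_H ‖ p_C ⊗ p_E ) = Σ_{(e,{i,j}): p_H({i,j},e)>0} p_H({i,j},e)·log( p_H({i,j},e)/(p_C({i,j})·p_E(e)) ). -/

import Mathlib

open Finset

/-- The joint distribution `p_H({i,j}, e) = (1/E)·2/(|e|(|e|−1))` if `{i,j} ⊆ e`, `0`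
otherwise, on (unordered pairs of distinct nodes) × hyperedges. -/
noncomputable def pJoint {V : Type*} [DecidableEq V] (E : Finset (Finset V))
    (i j : V) (e : Finset V) : ℝ :=
  if i ∈ e ∧ j ∈ e then (1 / (E.card : ℝ)) * (2 / ((e.card : ℝ) * ((e.card : ℝ) - 1))) else 0

/-- The clique-decomposition marginal `p_C({i,j}) = (1/E)·Σ_{e∈E : {i,j}⊆e} 2/(|e|(|e|−1))`. -/
noncomputable def pClique {V : Type*} [DecidableEq V] (E : Finset (Finset V)) (i j : V) : ℝ :=
  (1 / (E.card : ℝ)) *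
    ∑ e ∈ E.filter (fun e => i ∈ e ∧ j ∈ e), 2 / ((e.card : ℝ) * ((e.card : ℝ) - 1))

lemma two_mul_card_lt_pairs {V : Type*} [LinearOrder V] (e : Finset V) :
    2 * ((e ×ˢ e).filter fun ij => ij.1 < ij.2).card = e.card * (e.card - 1) := by
  have hswap : ((e ×ˢ e).filter fun ij => ij.1 < ij.2).card
      = ((e ×ˢ e).filter fun ij => ij.2 < ij.1).card := by
    apply Finset.card_bij (fun ij _ => ij.swap)
    · intro ij hij
      simp only [mem_filter, mem_product] at *
      exact ⟨⟨hij.1.2, hij.1.1⟩, hij.2⟩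
    · intro a ha b hb h
      exact Prod.swap_injective h
    · intro b hb
      refine ⟨b.swap, ?_, by simp⟩
      simp only [mem_filter, mem_product, Prod.fst_swap, Prod.snd_swap] at *
      exact ⟨⟨hb.1.2, hb.1.1⟩, hb.2⟩
  have h1 : (e.offDiag.filter fun ij => ij.1 < ij.2)
      = (e ×ˢ e).filter fun ij => ij.1 < ij.2 := by
    rw [show e.offDiag = (e ×ˢ e).filter (fun a => a.1 ≠ a.2) by ext; simp [and_assoc]]
    rw [Finset.filter_filter]
    apply Finset.filter_congr
    intro ij _
    constructor
    · exact fun h => h.2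
    · exact fun h => ⟨ne_of_lt h, h⟩
  have h2 : (e.offDiag.filter fun ij => ¬ ij.1 < ij.2)
      = (e ×ˢ e).filter fun ij => ij.2 < ij.1 := by
    rw [show e.offDiag = (e ×ˢ e).filter (fun a => a.1 ≠ a.2) by ext; simp [and_assoc]]
    rw [Finset.filter_filter]
    apply Finset.filter_congr
    intro ij _
    constructor
    · exact fun h => lt_of_le_of_ne (not_lt.mp h.2) h.1.symm
    · exact fun h => ⟨(ne_of_lt h).symm, not_lt.mpr h.le⟩
  have hsum := Finset.card_filter_add_card_filter_not
      (s := e.offDiag) (p := fun ij => ij.1 < ij.2)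
  rw [h1, h2, hswap] at hsum
  rw [Finset.offDiag_card] at hsum
  have hh : e.card * (e.card - 1) = e.card * e.card - e.card := by
    rw [Nat.mul_sub_one]
  rw [hswap]
  omega

/-- Exactly,
`H(p_C) − KL(p_H ‖ p_C ⊗ p_E) = −(1/E)·Σ_{e∈E} log(2/(|e|(|e|−1))) = log γ₁`, where
`p_C ⊗ p_E` is the product distribution, `H(p_C) = −Σ_{{i,j}} p_C log p_C`, and the KL divergence
sums `p_H·log(p_H/(p_C·p_E))` over the pairs `(e, {i,j})` with `p_H({i,j},e) > 0`. -/
theorem clique_entropy_minus_KL {V : Type*} [Fintype V] [LinearOrder V]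
    (E : Finset (Finset V)) (hE : E.Nonempty) (hcard : ∀ e ∈ E, 2 ≤ e.card) :
    ((-(∑ ij ∈ ((univ : Finset V) ×ˢ univ).filter fun ij => ij.1 < ij.2,
          pClique E ij.1 ij.2 * Real.log (pClique E ij.1 ij.2)))
      - ∑ e ∈ E, ∑ ij ∈ ((univ : Finset V) ×ˢ univ).filter
            (fun ij => ij.1 < ij.2 ∧ 0 < pJoint E ij.1 ij.2 e),
          pJoint E ij.1 ij.2 e *
            Real.log (pJoint E ij.1 ij.2 e / (pClique E ij.1 ij.2 * (1 / (E.card : ℝ))))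
      = -(1 / (E.card : ℝ)) * ∑ e ∈ E, Real.log (2 / ((e.card : ℝ) * ((e.card : ℝ) - 1))))
    ∧
    -(1 / (E.card : ℝ)) * ∑ e ∈ E, Real.log (2 / ((e.card : ℝ) * ((e.card : ℝ) - 1)))
      = Real.log (Real.exp (-(1 / (E.card : ℝ)) *
          ∑ f ∈ E, Real.log (2 / ((f.card : ℝ) * ((f.card : ℝ) - 1))))) := by
  constructor
  · have hEpos : (0:ℝ) < E.card := by
      exact_mod_cast Finset.card_pos.mpr hE
    have hw : ∀ e ∈ E, (0:ℝ) < 2 / ((e.card:ℝ) * ((e.card:ℝ) - 1)) := by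
      intro e he
      have h2 : (2:ℝ) ≤ (e.card:ℝ) := by exact_mod_cast hcard e he
      have h1 : (1:ℝ) ≤ (e.card:ℝ) - 1 := by linarith
      have : (0:ℝ) < (e.card:ℝ) * ((e.card:ℝ) - 1) := by nlinarith
      positivity
    have hpC : ∀ e ∈ E, ∀ i j : V, i ∈ e → j ∈ e → 0 < pClique E i j := by
      intro e he i j hi hj
      unfold pClique
      apply mul_pos (by positivity)
      apply Finset.sum_pos
      · intro f hf
        exact hw f (Finset.mem_filter.mp hf).1
      · exact ⟨e, Finset.mem_filter.mpr ⟨he, hi, hj⟩⟩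
    -- rewrite the KL inner sums
    have key : ∀ e ∈ E,
        ∑ ij ∈ ((univ : Finset V) ×ˢ univ).filter
            (fun ij => ij.1 < ij.2 ∧ 0 < pJoint E ij.1 ij.2 e),
          pJoint E ij.1 ij.2 e *
            Real.log (pJoint E ij.1 ij.2 e / (pClique E ij.1 ij.2 * (1 / (E.card : ℝ))))
        = ∑ ij ∈ (((univ : Finset V) ×ˢ univ).filter fun ij => ij.1 < ij.2),
            (if ij.1 ∈ e ∧ ij.2 ∈ e then
              (1 / (E.card:ℝ)) * (2 / ((e.card:ℝ) * ((e.card:ℝ) - 1))) *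
                (Real.log (2 / ((e.card:ℝ) * ((e.card:ℝ) - 1)))
                  - Real.log (pClique E ij.1 ij.2)) else 0) := by
      intro e he
      rw [← Finset.sum_filter, Finset.filter_filter]
      have hset : (((univ : Finset V) ×ˢ univ).filter
            fun ij => ij.1 < ij.2 ∧ 0 < pJoint E ij.1 ij.2 e)
          = (((univ : Finset V) ×ˢ univ).filter
            fun ij => ij.1 < ij.2 ∧ ij.1 ∈ e ∧ ij.2 ∈ e) := by
        apply Finset.filter_congr
        intro ij _
        unfold pJoint
        constructor
        · rintro ⟨hlt, hpos⟩
          refine ⟨hlt, ?_⟩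
          by_contra hmem
          rw [if_neg hmem] at hpos
          exact lt_irrefl 0 hpos
        · rintro ⟨hlt, hmem⟩
          refine ⟨hlt, ?_⟩
          rw [if_pos hmem]
          exact mul_pos (by positivity) (hw e he)
      rw [hset]
      apply Finset.sum_congr rfl
      intro ij hij
      simp only [Finset.mem_filter] at hij
      obtain ⟨-, -, hi, hj⟩ := hij
      have hpj : pJoint E ij.1 ij.2 e
          = (1 / (E.card:ℝ)) * (2 / ((e.card:ℝ) * ((e.card:ℝ) - 1))) := by
        unfold pJoint; rw [if_pos ⟨hi, hj⟩]
      rw [hpj]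
      congr 1
      have hpc := hpC e he ij.1 ij.2 hi hj
      have harg : (1 / (E.card:ℝ)) * (2 / ((e.card:ℝ) * ((e.card:ℝ) - 1)))
            / (pClique E ij.1 ij.2 * (1 / (E.card:ℝ)))
          = (2 / ((e.card:ℝ) * ((e.card:ℝ) - 1))) / pClique E ij.1 ij.2 := by
        rw [mul_comm (pClique E ij.1 ij.2)]
        exact mul_div_mul_left _ _ (by positivity : (1/(E.card:ℝ)) ≠ 0)
      rw [harg, Real.log_div (hw e he).ne' hpc.ne']
    -- split each inner sum into two pieces
    have split : ∀ e ∈ E,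
        ∑ ij ∈ (((univ : Finset V) ×ˢ univ).filter fun ij => ij.1 < ij.2),
            (if ij.1 ∈ e ∧ ij.2 ∈ e then
              (1 / (E.card:ℝ)) * (2 / ((e.card:ℝ) * ((e.card:ℝ) - 1))) *
                (Real.log (2 / ((e.card:ℝ) * ((e.card:ℝ) - 1)))
                  - Real.log (pClique E ij.1 ij.2)) else 0)
        = (∑ ij ∈ (((univ : Finset V) ×ˢ univ).filter fun ij => ij.1 < ij.2),
            (if ij.1 ∈ e ∧ ij.2 ∈ e then
              (1 / (E.card:ℝ)) * (2 / ((e.card:ℝ) * ((e.card:ℝ) - 1))) *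
                Real.log (2 / ((e.card:ℝ) * ((e.card:ℝ) - 1))) else 0))
          - (∑ ij ∈ (((univ : Finset V) ×ˢ univ).filter fun ij => ij.1 < ij.2),
            (if ij.1 ∈ e ∧ ij.2 ∈ e then
              (1 / (E.card:ℝ)) * (2 / ((e.card:ℝ) * ((e.card:ℝ) - 1))) *
                Real.log (pClique E ij.1 ij.2) else 0)) := by
      intro e _
      rw [← Finset.sum_sub_distrib]
      apply Finset.sum_congr rfl
      intro ij _
      split <;> ring
    -- first piece: constant-count computation
    have piece1 : ∀ e ∈ E,
        ∑ ij ∈ (((univ : Finset V) ×ˢ univ).filter fun ij => ij.1 < ij.2),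
            (if ij.1 ∈ e ∧ ij.2 ∈ e then
              (1 / (E.card:ℝ)) * (2 / ((e.card:ℝ) * ((e.card:ℝ) - 1))) *
                Real.log (2 / ((e.card:ℝ) * ((e.card:ℝ) - 1))) else 0)
        = (1 / (E.card:ℝ)) * Real.log (2 / ((e.card:ℝ) * ((e.card:ℝ) - 1))) := by
      intro e he
      rw [← Finset.sum_filter, Finset.filter_filter]
      have hset : (((univ : Finset V) ×ˢ univ).filter
            fun ij => ij.1 < ij.2 ∧ ij.1 ∈ e ∧ ij.2 ∈ e)
          = (e ×ˢ e).filter fun ij => ij.1 < ij.2 := by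
        ext ij
        simp only [mem_filter, mem_product, mem_univ, true_and]
        tauto
      rw [hset, Finset.sum_const, nsmul_eq_mul]
      have h2k := two_mul_card_lt_pairs e
      have hc1 : 1 ≤ e.card := le_trans (by norm_num) (hcard e he)
      have hcast : 2 * ((((e ×ˢ e).filter fun ij => ij.1 < ij.2).card : ℕ) : ℝ)
          = (e.card:ℝ) * ((e.card:ℝ) - 1) := by
        have := congrArg (Nat.cast : ℕ → ℝ) h2k
        push_cast [Nat.cast_sub hc1] at this
        linarith
      have h2 : (2:ℝ) ≤ (e.card:ℝ) := by exact_mod_cast hcard e he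
      have hcc : (0:ℝ) < (e.card:ℝ) * ((e.card:ℝ) - 1) := by nlinarith
      have hk : ((((e ×ˢ e).filter fun ij => ij.1 < ij.2).card : ℕ) : ℝ)
          * (2 / ((e.card:ℝ) * ((e.card:ℝ) - 1))) = 1 := by
        rw [mul_div_assoc']
        rw [div_eq_one_iff_eq hcc.ne']
        linarith
      linear_combination ((1 / (E.card:ℝ)) *
        Real.log (2 / ((e.card:ℝ) * ((e.card:ℝ) - 1)))) * hk
    -- second piece: swap sums to recover the entropy
    have piece2 :
        ∑ e ∈ E, ∑ ij ∈ (((univ : Finset V) ×ˢ univ).filter fun ij => ij.1 < ij.2),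
            (if ij.1 ∈ e ∧ ij.2 ∈ e then
              (1 / (E.card:ℝ)) * (2 / ((e.card:ℝ) * ((e.card:ℝ) - 1))) *
                Real.log (pClique E ij.1 ij.2) else 0)
        = ∑ ij ∈ (((univ : Finset V) ×ˢ univ).filter fun ij => ij.1 < ij.2),
            pClique E ij.1 ij.2 * Real.log (pClique E ij.1 ij.2) := by
      rw [Finset.sum_comm]
      apply Finset.sum_congr rfl
      intro ij _
      have hfac : ∀ e : Finset V,
          (if ij.1 ∈ e ∧ ij.2 ∈ e then
              (1 / (E.card:ℝ)) * (2 / ((e.card:ℝ) * ((e.card:ℝ) - 1))) *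
                Real.log (pClique E ij.1 ij.2) else 0)
          = (if ij.1 ∈ e ∧ ij.2 ∈ e then
              (1 / (E.card:ℝ)) * (2 / ((e.card:ℝ) * ((e.card:ℝ) - 1))) else 0)
            * Real.log (pClique E ij.1 ij.2) := by
        intro e; split <;> simp
      simp only [hfac]
      rw [← Finset.sum_mul, ← Finset.sum_filter]
      congr 1
      unfold pClique
      rw [Finset.mul_sum]
    -- assemble
    calc (-(∑ ij ∈ ((univ : Finset V) ×ˢ univ).filter fun ij => ij.1 < ij.2,
          pClique E ij.1 ij.2 * Real.log (pClique E ij.1 ij.2)))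
      - ∑ e ∈ E, ∑ ij ∈ ((univ : Finset V) ×ˢ univ).filter
            (fun ij => ij.1 < ij.2 ∧ 0 < pJoint E ij.1 ij.2 e),
          pJoint E ij.1 ij.2 e *
            Real.log (pJoint E ij.1 ij.2 e / (pClique E ij.1 ij.2 * (1 / (E.card : ℝ))))
        = (-(∑ ij ∈ ((univ : Finset V) ×ˢ univ).filter fun ij => ij.1 < ij.2,
            pClique E ij.1 ij.2 * Real.log (pClique E ij.1 ij.2)))
          - ((∑ e ∈ E, (1 / (E.card:ℝ)) * Real.log (2 / ((e.card:ℝ) * ((e.card:ℝ) - 1))))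
            - ∑ ij ∈ (((univ : Finset V) ×ˢ univ).filter fun ij => ij.1 < ij.2),
                pClique E ij.1 ij.2 * Real.log (pClique E ij.1 ij.2)) := by
          congr 1
          rw [Finset.sum_congr rfl key, Finset.sum_congr rfl split,
            Finset.sum_sub_distrib, Finset.sum_congr rfl piece1, piece2]
      _ = -(1 / (E.card : ℝ)) * ∑ e ∈ E, Real.log (2 / ((e.card : ℝ) * ((e.card : ℝ) - 1))) := by
          rw [neg_mul, Finset.mul_sum]
          ring
  · exact (Real.log_exp _).symm
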